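/- For product probability measures, the squared Hellinger distance tensorizes and subadds: if P = ⊗ᵢ₌₁ⁿ Pᵢ and Q = ⊗ᵢ₌₁ⁿ Qᵢ, then H²(P, Q) = 1 - ∏ᵢ (1 - H²(Pᵢ, Qᵢ)) ≤ Σᵢ H²(Pᵢ, Qᵢ). -/

import Mathlib

open MeasureTheory BigOperators

/-- Squared Hellinger distance `H²(P,Q) = 1 - ∫ √(dP dQ)` between two measures. -/
noncomputable def helSq {Ω : Type*} [MeasurableSpace Ω] (P Q : Measure Ω) : ℝ :=
  1 - ∫ x, Real.sqrt ((P.rnDeriv (P + Q) x).toReal * (Q.rnDeriv (P + Q) x).toReal) ∂(P + Q)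

/-- The Hellinger affinity (Bhattacharyya coefficient). -/
noncomputable def helAff {Ω : Type*} [MeasurableSpace Ω] (P Q : Measure Ω) : ℝ :=
  ∫ x, Real.sqrt ((P.rnDeriv (P + Q) x).toReal * (Q.rnDeriv (P + Q) x).toReal) ∂(P + Q)

lemma helSq_eq {Ω : Type*} [MeasurableSpace Ω] (P Q : Measure Ω) :
    helSq P Q = 1 - helAff P Q := rfl

lemma sqrt_finset_prod {ι : Type*} (s : Finset ι) (f : ι → ℝ) (hf : ∀ i, 0 ≤ f i) :
    Real.sqrt (∏ i ∈ s, f i) = ∏ i ∈ s, Real.sqrt (f i) := by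
  induction s using Finset.cons_induction with
  | empty => simp
  | cons a s ha ih =>
    rw [Finset.prod_cons, Finset.prod_cons, Real.sqrt_mul (hf a), ih]

/-- Change of dominating measure for the Hellinger affinity. -/
lemma helAff_eq_integral {Ω : Type*} [MeasurableSpace Ω] (P Q ν : Measure Ω)
    [IsFiniteMeasure P] [IsFiniteMeasure Q] [SigmaFinite ν]
    (hP : P ≪ ν) (hQ : Q ≪ ν) :
    helAff P Q = ∫ x, Real.sqrt ((P.rnDeriv ν x).toReal * (Q.rnDeriv ν x).toReal) ∂ν := by
  have hPμ : P ≪ P + Q := Measure.absolutelyContinuous_of_le (Measure.le_add_right le_rfl)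
  have hQμ : Q ≪ P + Q := Measure.absolutelyContinuous_of_le (Measure.le_add_left le_rfl)
  have hμν : P + Q ≪ ν := Measure.AbsolutelyContinuous.add_left_iff.mpr ⟨hP, hQ⟩
  rw [helAff, ← MeasureTheory.integral_rnDeriv_smul hμν]
  refine integral_congr_ae ?_
  filter_upwards [Measure.rnDeriv_mul_rnDeriv (κ := ν) hPμ,
    Measure.rnDeriv_mul_rnDeriv (κ := ν) hQμ] with x h1 h2
  rw [← h1, ← h2, Pi.mul_apply, Pi.mul_apply, ENNReal.toReal_mul, ENNReal.toReal_mul]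
  set a := (P.rnDeriv (P + Q) x).toReal
  set b := (Q.rnDeriv (P + Q) x).toReal
  set c := ((P + Q).rnDeriv ν x).toReal
  have hc : 0 ≤ c := ENNReal.toReal_nonneg
  have ha : 0 ≤ a := ENNReal.toReal_nonneg
  have hb : 0 ≤ b := ENNReal.toReal_nonneg
  have key : Real.sqrt (a * c * (b * c)) = Real.sqrt (a * b) * c := by
    rw [show a * c * (b * c) = a * b * (c * c) by ring,
      Real.sqrt_mul (mul_nonneg ha hb) (c * c), Real.sqrt_mul_self hc]
  rw [smul_eq_mul, key]
  ring

/-- Fubini for `lintegral` of a product of coordinate functions over a finite product measure. -/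
lemma lintegral_pi_prod {n : ℕ} {α : Fin n → Type*} [∀ i, MeasurableSpace (α i)]
    (ν : ∀ i, Measure (α i)) [∀ i, SigmaFinite (ν i)]
    (f : ∀ i, α i → ENNReal) (hf : ∀ i, Measurable (f i)) :
    ∫⁻ x, ∏ i, f i (x i) ∂Measure.pi ν = ∏ i, ∫⁻ x, f i x ∂ν i := by
  induction n with
  | zero => simp
  | succ n ih =>
    have hmp := (measurePreserving_piFinSuccAbove ν 0).symm
    rw [← hmp.lintegral_comp_emb (MeasurableEquiv.measurableEmbedding _)]
    simp_rw [MeasurableEquiv.piFinSuccAbove_symm_apply, Fin.insertNthEquiv,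
      Fin.prod_univ_succ, Fin.insertNth_zero, Equiv.coe_fn_mk, Fin.cons_zero, Fin.cons_succ]
    exact (lintegral_prod_mul (f := f 0)
      (g := fun (y : ∀ j, α (Fin.succAbove 0 j)) => ∏ i, f (Fin.succ i) (y i))
      (hf 0).aemeasurable
      (Finset.measurable_prod Finset.univ
        (fun i _ => (hf i.succ).comp (measurable_pi_apply i))).aemeasurable).trans
      (congrArg _ (ih (fun i => ν i.succ) (fun i => f i.succ) (fun i => hf i.succ)))

/-- A product of absolutely continuous measures is the `withDensity` of the product of the
Radon–Nikodym derivatives. -/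
lemma pi_eq_withDensity {n : ℕ} {α : Fin n → Type*} [∀ i, MeasurableSpace (α i)]
    (P ν : ∀ i, Measure (α i)) [∀ i, IsFiniteMeasure (P i)] [∀ i, IsFiniteMeasure (ν i)]
    (hP : ∀ i, P i ≪ ν i) :
    Measure.pi P
      = (Measure.pi ν).withDensity (fun x => ∏ i, (P i).rnDeriv (ν i) (x i)) := by
  refine Measure.pi_eq fun s hs => ?_
  rw [withDensity_apply _ (MeasurableSet.univ_pi hs), ← lintegral_indicator
    (MeasurableSet.univ_pi hs)]
  have hind : ∀ x, (Set.pi Set.univ s).indicator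
      (fun x => ∏ i, (P i).rnDeriv (ν i) (x i)) x
      = ∏ i, (s i).indicator ((P i).rnDeriv (ν i)) (x i) := by
    intro x
    by_cases hx : x ∈ Set.pi Set.univ s
    · rw [Set.indicator_of_mem hx]
      exact Finset.prod_congr rfl fun i _ =>
        (Set.indicator_of_mem (hx i trivial) _).symm
    · rw [Set.indicator_of_notMem hx]
      rw [Set.mem_univ_pi] at hx
      push_neg at hx
      obtain ⟨i, hi⟩ := hx
      exact (Finset.prod_eq_zero (Finset.mem_univ i)
        (Set.indicator_of_notMem hi _)).symm
  simp_rw [hind]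
  rw [lintegral_pi_prod ν _ (fun i =>
    (Measure.measurable_rnDeriv (P i) (ν i)).indicator (hs i))]
  refine Finset.prod_congr rfl fun i _ => ?_
  rw [lintegral_indicator (hs i), ← withDensity_apply _ (hs i),
    Measure.withDensity_rnDeriv_eq _ _ (hP i)]

/-- Fubini for real integrals of products of coordinate functions. -/
lemma integral_pi_prod {n : ℕ} {α : Fin n → Type*} [∀ i, MeasurableSpace (α i)]
    (ν : ∀ i, Measure (α i)) [h : ∀ i, SigmaFinite (ν i)] (f : ∀ i, α i → ℝ) :
    ∫ x, ∏ i, f i (x i) ∂Measure.pi ν = ∏ i, ∫ x, f i x ∂ν i := by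
  letI : ∀ i, MeasureSpace (α i) := fun i => ⟨ν i⟩
  exact MeasureTheory.integral_fin_nat_prod_eq_prod f

lemma helAff_nonneg {Ω : Type*} [MeasurableSpace Ω] (P Q : Measure Ω) :
    0 ≤ helAff P Q :=
  integral_nonneg fun _ => Real.sqrt_nonneg _

lemma helAff_ae_le {Ω : Type*} [MeasurableSpace Ω] (P Q : Measure Ω)
    [IsFiniteMeasure P] [IsFiniteMeasure Q] :
    ∀ᵐ x ∂(P + Q), Real.sqrt ((P.rnDeriv (P + Q) x).toReal
      * (Q.rnDeriv (P + Q) x).toReal) ≤ 1 / 2 := by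
  filter_upwards [Measure.rnDeriv_add P Q (P + Q), Measure.rnDeriv_self (P + Q)]
    with x h1 h2
  have hsum : P.rnDeriv (P + Q) x + Q.rnDeriv (P + Q) x = 1 := by
    rw [← Pi.add_apply, ← h1, h2]
  have hPle : P.rnDeriv (P + Q) x ≤ 1 := le_trans le_self_add hsum.le
  have hQle : Q.rnDeriv (P + Q) x ≤ 1 := le_trans le_add_self hsum.le
  have hPfin : P.rnDeriv (P + Q) x ≠ ⊤ := (lt_of_le_of_lt hPle ENNReal.one_lt_top).ne
  have hQfin : Q.rnDeriv (P + Q) x ≠ ⊤ := (lt_of_le_of_lt hQle ENNReal.one_lt_top).ne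
  set a := (P.rnDeriv (P + Q) x).toReal
  set b := (Q.rnDeriv (P + Q) x).toReal
  have hab : a + b = 1 := by
    rw [← ENNReal.toReal_add hPfin hQfin, hsum, ENNReal.toReal_one]
  have ha : 0 ≤ a := ENNReal.toReal_nonneg
  have hb : 0 ≤ b := ENNReal.toReal_nonneg
  rw [show (1 : ℝ) / 2 = Real.sqrt ((1 / 2) ^ 2) by
    rw [Real.sqrt_sq]; norm_num]
  refine Real.sqrt_le_sqrt ?_
  nlinarith [sq_nonneg (a - b)]

lemma helAff_integrable {Ω : Type*} [MeasurableSpace Ω] (P Q : Measure Ω)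
    [IsFiniteMeasure P] [IsFiniteMeasure Q] :
    Integrable (fun x => Real.sqrt ((P.rnDeriv (P + Q) x).toReal
      * (Q.rnDeriv (P + Q) x).toReal)) (P + Q) := by
  refine Integrable.mono' (integrable_const (1 / 2 : ℝ)) ?_ ?_
  · exact (((Measure.measurable_rnDeriv _ _).ennreal_toReal.mul
      (Measure.measurable_rnDeriv _ _).ennreal_toReal).sqrt).aestronglyMeasurable
  · filter_upwards [helAff_ae_le P Q] with x hx
    rwa [Real.norm_eq_abs, abs_of_nonneg (Real.sqrt_nonneg _)]

lemma helAff_le_one {Ω : Type*} [MeasurableSpace Ω] (P Q : Measure Ω)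
    [IsProbabilityMeasure P] [IsProbabilityMeasure Q] :
    helAff P Q ≤ 1 := by
  have h := integral_mono_ae (helAff_integrable P Q)
    (integrable_const (1 / 2 : ℝ)) (helAff_ae_le P Q)
  rw [integral_const, smul_eq_mul] at h
  have h2 : (P + Q).real Set.univ = 2 := by
    norm_num [Measure.real, Measure.add_apply]
  rw [h2] at h
  rw [helAff]
  linarith [h]

/-- Tensorization of the Hellinger affinity. -/
lemma helAff_pi {n : ℕ} {α : Fin n → Type*} [∀ i, MeasurableSpace (α i)]
    (P Q : ∀ i, Measure (α i))
    [∀ i, IsProbabilityMeasure (P i)] [∀ i, IsProbabilityMeasure (Q i)] :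
    helAff (Measure.pi P) (Measure.pi Q) = ∏ i, helAff (P i) (Q i) := by
  set ν : ∀ i, Measure (α i) := fun i => P i + Q i with hν
  have hPac : ∀ i, P i ≪ ν i := fun i =>
    Measure.absolutelyContinuous_of_le (Measure.le_add_right le_rfl)
  have hQac : ∀ i, Q i ≪ ν i := fun i =>
    Measure.absolutelyContinuous_of_le (Measure.le_add_left le_rfl)
  set F : (∀ i, α i) → ENNReal := fun x => ∏ i, (P i).rnDeriv (ν i) (x i) with hF
  set G : (∀ i, α i) → ENNReal := fun x => ∏ i, (Q i).rnDeriv (ν i) (x i) with hG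
  have hFmeas : Measurable F := Finset.measurable_prod _ fun i _ =>
    (Measure.measurable_rnDeriv _ _).comp (measurable_pi_apply i)
  have hGmeas : Measurable G := Finset.measurable_prod _ fun i _ =>
    (Measure.measurable_rnDeriv _ _).comp (measurable_pi_apply i)
  have hPpi : Measure.pi P = (Measure.pi ν).withDensity F := pi_eq_withDensity P ν hPac
  have hQpi : Measure.pi Q = (Measure.pi ν).withDensity G := pi_eq_withDensity Q ν hQac
  have hACP : Measure.pi P ≪ Measure.pi ν := hPpi ▸ withDensity_absolutelyContinuous _ _
  have hACQ : Measure.pi Q ≪ Measure.pi ν := hQpi ▸ withDensity_absolutelyContinuous _ _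
  rw [helAff_eq_integral _ _ (Measure.pi ν) hACP hACQ]
  have h1 : (Measure.pi P).rnDeriv (Measure.pi ν) =ᵐ[Measure.pi ν] F := by
    rw [hPpi]; exact Measure.rnDeriv_withDensity _ hFmeas
  have h2 : (Measure.pi Q).rnDeriv (Measure.pi ν) =ᵐ[Measure.pi ν] G := by
    rw [hQpi]; exact Measure.rnDeriv_withDensity _ hGmeas
  calc ∫ x, Real.sqrt (((Measure.pi P).rnDeriv (Measure.pi ν) x).toReal
        * ((Measure.pi Q).rnDeriv (Measure.pi ν) x).toReal) ∂Measure.pi ν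
      = ∫ x, ∏ i, Real.sqrt (((P i).rnDeriv (ν i) (x i)).toReal
          * ((Q i).rnDeriv (ν i) (x i)).toReal) ∂Measure.pi ν := by
        refine integral_congr_ae ?_
        filter_upwards [h1, h2] with x hx1 hx2
        rw [hx1, hx2, hF, hG, ENNReal.toReal_prod, ENNReal.toReal_prod,
          ← Finset.prod_mul_distrib,
          sqrt_finset_prod _ _ (fun i => by positivity)]
    _ = ∏ i, ∫ x, Real.sqrt (((P i).rnDeriv (ν i) x).toReal
          * ((Q i).rnDeriv (ν i) x).toReal) ∂ν i := integral_pi_prod ν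
          (fun i x => Real.sqrt (((P i).rnDeriv (ν i) x).toReal
            * ((Q i).rnDeriv (ν i) x).toReal))
    _ = ∏ i, helAff (P i) (Q i) := rfl

lemma one_sub_sum_le_prod {ι : Type*} (s : Finset ι) (a : ι → ℝ)
    (h0 : ∀ i, 0 ≤ a i) (h1 : ∀ i, a i ≤ 1) :
    1 - ∑ i ∈ s, (1 - a i) ≤ ∏ i ∈ s, a i := by
  induction s using Finset.cons_induction with
  | empty => simp
  | cons j s hj ih =>
    rw [Finset.prod_cons, Finset.sum_cons]
    have hprod0 : 0 ≤ ∏ i ∈ s, a i := Finset.prod_nonneg fun i _ => h0 i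
    have hprod1 : ∏ i ∈ s, a i ≤ 1 := Finset.prod_le_one (fun i _ => h0 i) (fun i _ => h1 i)
    nlinarith [h0 j, h1 j, ih]

theorem hellinger_tensorization {n : ℕ} {α : Fin n → Type*}
    [∀ i, MeasurableSpace (α i)]
    (P Q : ∀ i, Measure (α i))
    [∀ i, IsProbabilityMeasure (P i)] [∀ i, IsProbabilityMeasure (Q i)] :
    helSq (Measure.pi P) (Measure.pi Q) = 1 - ∏ i, (1 - helSq (P i) (Q i)) ∧
    helSq (Measure.pi P) (Measure.pi Q) ≤ ∑ i, helSq (P i) (Q i) := by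
  have key : helSq (Measure.pi P) (Measure.pi Q) = 1 - ∏ i, (1 - helSq (P i) (Q i)) := by
    rw [helSq_eq, helAff_pi P Q]
    congr 1
    exact Finset.prod_congr rfl fun i _ => by rw [helSq_eq]; ring
  refine ⟨key, ?_⟩
  rw [key]
  have h := one_sub_sum_le_prod Finset.univ (fun i => 1 - helSq (P i) (Q i))
    (fun i => by
      have := helAff_nonneg (P i) (Q i)
      show (0:ℝ) ≤ 1 - helSq (P i) (Q i)
      rw [helSq_eq]; linarith)
    (fun i => by
      have := helAff_le_one (P i) (Q i)
      show 1 - helSq (P i) (Q i) ≤ 1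
      rw [helSq_eq]; linarith)
  simp only [sub_sub_cancel] at h
  linarith
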